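/- Let g : [t₁, T) → ℝ be positive and differentiable, ψ : [t₁, T) → ℝ continuous, H : [t₁, T) → ℝ continuous with H(t) ≥ ε₀ > 0 for all t, and suppose g'(t) = -2·exp(ψ(t))·H(t)·g(t) for all t. Then for every T' ∈ [t₁, T), ∫_{t₁}^{T'} exp(ψ(t))·√(g(t)) dt ≤ (1/ε₀)·√(g(t₁)). -/
import Mathlib


open Real MeasureTheory Set

theorem volume_estimate_pointwise
    (t₁ T ε₀ : ℝ) (g ψ H : ℝ → ℝ)
    (hT : t₁ < T)
    (hgpos : ∀ t ∈ Ico t₁ T, 0 < g t)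
    (hψ : ContinuousOn ψ (Ico t₁ T))
    (hH : ContinuousOn H (Ico t₁ T))
    (hε : 0 < ε₀)
    (hHε : ∀ t ∈ Ico t₁ T, ε₀ ≤ H t)
    (hg' : ∀ t ∈ Ico t₁ T, HasDerivAt g (-2 * Real.exp (ψ t) * H t * g t) t) :
    ∀ T' ∈ Ico t₁ T,
      ∫ t in t₁..T', Real.exp (ψ t) * Real.sqrt (g t) ≤ (1 / ε₀) * Real.sqrt (g t₁) := by
  intro T' hT'
  obtain ⟨hT1, hT2⟩ := hT'
  have hsub : Icc t₁ T' ⊆ Ico t₁ T := fun x hx => ⟨hx.1, lt_of_le_of_lt hx.2 hT2⟩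
  have huIcc : uIcc t₁ T' = Icc t₁ T' := uIcc_of_le hT1
  have hgc : ContinuousOn g (Icc t₁ T') := fun x hx =>
    ((hg' x (hsub hx)).continuousAt).continuousWithinAt
  have hcont : ContinuousOn (fun t => Real.exp (ψ t) * H t * Real.sqrt (g t)) (Icc t₁ T') :=
    (((hψ.mono hsub).rexp).mul (hH.mono hsub)).mul hgc.sqrt
  have hint : IntervalIntegrable (fun t => -(Real.exp (ψ t) * H t * Real.sqrt (g t)))
      volume t₁ T' := (hcont.neg).intervalIntegrable_of_Icc hT1
  have hu : ∀ t ∈ uIcc t₁ T', HasDerivAt (fun s => Real.sqrt (g s))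
      (-(Real.exp (ψ t) * H t * Real.sqrt (g t))) t := by
    intro t ht
    rw [huIcc] at ht
    have hgt := hgpos t (hsub ht)
    have hs : Real.sqrt (g t) ≠ 0 := ne_of_gt (Real.sqrt_pos.mpr hgt)
    have h := (hg' t (hsub ht)).sqrt (ne_of_gt hgt)
    convert h using 1
    have hq : Real.sqrt (g t) * Real.sqrt (g t) = g t := Real.mul_self_sqrt hgt.le
    rw [eq_div_iff (by positivity : (2:ℝ) * Real.sqrt (g t) ≠ 0)]
    linear_combination (-2 * Real.exp (ψ t) * H t) * hq
  have hFTC : ∫ t in t₁..T', -(Real.exp (ψ t) * H t * Real.sqrt (g t)) =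
      Real.sqrt (g T') - Real.sqrt (g t₁) :=
    intervalIntegral.integral_eq_sub_of_hasDerivAt hu hint
  have hint2 : IntervalIntegrable (fun t => Real.exp (ψ t) * Real.sqrt (g t)) volume t₁ T' :=
    (((hψ.mono hsub).rexp).mul hgc.sqrt).intervalIntegrable_of_Icc hT1
  have hint3 : IntervalIntegrable (fun t => (1 / ε₀) * -(-(Real.exp (ψ t) * H t * Real.sqrt (g t))))
      volume t₁ T' := (hint.neg.const_mul _)
  have hmono : ∫ t in t₁..T', Real.exp (ψ t) * Real.sqrt (g t) ≤
      ∫ t in t₁..T', (1 / ε₀) * -(-(Real.exp (ψ t) * H t * Real.sqrt (g t))) := by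
    apply intervalIntegral.integral_mono_on hT1 hint2 hint3
    intro t ht
    have hgt := hgpos t (hsub ht)
    have hε' := hHε t (hsub ht)
    have hnn : 0 ≤ Real.exp (ψ t) * Real.sqrt (g t) :=
      mul_nonneg (Real.exp_pos _).le (Real.sqrt_nonneg _)
    have : ε₀ * (Real.exp (ψ t) * Real.sqrt (g t)) ≤ H t * (Real.exp (ψ t) * Real.sqrt (g t)) :=
      mul_le_mul_of_nonneg_right hε' hnn
    rw [neg_neg]
    rw [div_mul_eq_mul_div, one_mul, le_div_iff₀ hε]
    nlinarith
  calc ∫ t in t₁..T', Real.exp (ψ t) * Real.sqrt (g t)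
      ≤ ∫ t in t₁..T', (1 / ε₀) * -(-(Real.exp (ψ t) * H t * Real.sqrt (g t))) := hmono
    _ = (1 / ε₀) * -(Real.sqrt (g T') - Real.sqrt (g t₁)) := by
        rw [intervalIntegral.integral_const_mul, intervalIntegral.integral_neg, hFTC]
    _ ≤ (1 / ε₀) * Real.sqrt (g t₁) := by
        have := Real.sqrt_nonneg (g T')
        have h0 : 0 ≤ 1 / ε₀ := by positivity
        nlinarith
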